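/- Let A be the adjacency matrix of a (2ℓ,d,δ)-expander scaled by d^{-1/p}, let x ∈ ℝ^n be k-sparse, supported on [k], with |x_1| ≥ … ≥ |x_k| and ‖x‖_p = 1, and let D_b, D'_b be the secondary and tertiary entries of block B_b. Then Σ_{(i,j) ∈ D_b ∪ D'_b} A_{ij}|x_j| ≤ 3δ(dk)^{1−1/p}. -/

import Mathlib

/-- Column `j` (numbered from `0`) lies in block `B_b = {(b-1)ℓ, …, bℓ - 1}`. -/
def InBlock (ℓ b j : ℕ) : Prop := (b - 1) * ℓ ≤ j ∧ j < b * ℓ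

/-- Secondary entries of block `b`. -/
def SecondaryEntries {n m : ℕ} (S : Fin n → Finset (Fin m)) (ℓ b : ℕ) :
    Set (Fin m × Fin n) :=
  {ij | ij.1 ∈ S ij.2 ∧ InBlock ℓ b (ij.2 : ℕ) ∧
    ∃ j' : Fin n, InBlock ℓ b (j' : ℕ) ∧ ij.1 ∈ S j' ∧ (j' : ℕ) < (ij.2 : ℕ)}

/-- Tertiary entries of block `b`. -/
def TertiaryEntries {n m : ℕ} (S : Fin n → Finset (Fin m)) (ℓ b k : ℕ) :
    Set (Fin m × Fin n) :=
  {ij | ij.1 ∈ S ij.2 ∧ b * ℓ ≤ (ij.2 : ℕ) ∧ (ij.2 : ℕ) < ((k + ℓ - 1) / ℓ) * ℓ ∧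
    ∃ j₀ : Fin n, InBlock ℓ b (j₀ : ℕ) ∧ ij.1 ∈ S j₀}

open Finset
open Finset

section Helpers

lemma abel_aux (C : ℝ) : ∀ (N : ℕ) (a w : ℕ → ℝ),
    (∀ s, s < N → 0 ≤ w s) → (∀ s t, s ≤ t → w t ≤ w s) →
    (∀ t, t ≤ N → ∑ s ∈ Finset.range t, a s ≤ C * t) →
    ∑ s ∈ Finset.range N, a s * w s ≤ C * ∑ s ∈ Finset.range N, w s := by
  intro N
  induction N with
  | zero => intro a w _ _ _; simp
  | succ N ih =>
    intro a w hw0 hmono hpre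
    have h1 : ∑ s ∈ Finset.range N, a s * (w s - w N) ≤
        C * ∑ s ∈ Finset.range N, (w s - w N) := by
      refine ih a (fun s => w s - w N) (fun s hs => ?_) (fun s t hst => ?_)
        (fun t ht => hpre t (le_trans ht (Nat.le_succ N)))
      · have := hmono s N (le_of_lt hs); linarith
      · have := hmono s t hst; linarith
    have h2 : (∑ s ∈ Finset.range (N+1), a s) * w N ≤ C * (N+1) * w N := by
      have h := hpre (N+1) le_rfl
      have hwN : 0 ≤ w N := hw0 N (Nat.lt_succ_self N)
      have h' : ∑ s ∈ Finset.range (N+1), a s ≤ C * (N+1) := by exact_mod_cast h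
      nlinarith
    have key : ∑ s ∈ Finset.range (N+1), a s * w s =
        ∑ s ∈ Finset.range N, a s * (w s - w N) + (∑ s ∈ Finset.range (N+1), a s) * w N := by
      rw [Finset.sum_range_succ (f := fun s => a s * w s), Finset.sum_mul,
        Finset.sum_range_succ (f := fun i => a i * w N)]
      rw [← add_assoc, ← Finset.sum_add_distrib]
      have : ∀ s, a s * (w s - w N) + a s * w N = a s * w s := fun s => by ring
      simp only [this]
    rw [key]
    have hsub : ∑ s ∈ Finset.range N, (w s - w N) =
        (∑ s ∈ Finset.range N, w s) - N * w N := by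
      rw [Finset.sum_sub_distrib, Finset.sum_const, Finset.card_range, nsmul_eq_mul]
    calc _ ≤ C * ∑ s ∈ Finset.range N, (w s - w N) + C * (N+1) * w N := by linarith
      _ = C * ∑ s ∈ Finset.range (N+1), w s := by
          rw [hsub, Finset.sum_range_succ]; push_cast; ring

lemma sum_comp_le {α : Type*} [DecidableEq α] (n : ℕ) (g : ℕ → ℝ) (hg : ∀ s, 0 ≤ g s)
    (hg0 : ∀ s, n ≤ s → g s = 0) (P : Finset α) (e : α → ℕ)
    (inj : ∀ x ∈ P, ∀ y ∈ P, e x = e y → x = y) :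
    ∑ p ∈ P, g (e p) ≤ ∑ s ∈ Finset.range n, g s := by
  rw [← Finset.sum_image (f := g) inj]
  rw [← Finset.sum_filter_of_ne (p := fun s => s < n)
    (by intro s _ hs; by_contra hn; push_neg at hn; exact hs (hg0 s hn))]
  apply Finset.sum_le_sum_of_subset_of_nonneg
  · intro s hs
    simp only [Finset.mem_filter, Finset.mem_range] at hs ⊢
    exact hs.2
  · intro s _ _; exact hg s

lemma l1_bound (n k : ℕ) (p : ℝ) (hp1 : 1 < p) (hk : 1 ≤ k) (hkn : k ≤ n) (x : Fin n → ℝ)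
    (hsupp : ∀ j : Fin n, k ≤ (j : ℕ) → x j = 0) (hnorm : ∑ j, |x j| ^ p = 1) :
    ∑ j, |x j| ≤ (k : ℝ) ^ (1 - 1/p) := by
  have hk0 : (0:ℝ) < k := by exact_mod_cast hk
  set w : Fin n → ℝ := fun j => if (j : ℕ) < k then (k : ℝ)⁻¹ else 0 with hw_def
  have hw : ∀ j ∈ Finset.univ (α := Fin n), 0 ≤ w j := by
    intro j _; simp only [hw_def]; split <;> positivity
  have hw' : ∑ j, w j = 1 := by
    rw [Fin.sum_univ_eq_sum_range (fun i => if i < k then (k:ℝ)⁻¹ else 0)]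
    rw [← Finset.sum_filter]
    have : (Finset.range n).filter (· < k) = Finset.range k := by
      ext i; simp only [Finset.mem_filter, Finset.mem_range]; omega
    rw [this, Finset.sum_const, Finset.card_range, nsmul_eq_mul]
    field_simp
  have hz : ∀ j ∈ Finset.univ (α := Fin n), 0 ≤ |x j| := fun j _ => abs_nonneg _
  have H := Real.arith_mean_le_rpow_mean Finset.univ w (fun j => |x j|) hw hw' hz (le_of_lt hp1)
  have e1 : ∀ j : Fin n, w j * |x j| = (k:ℝ)⁻¹ * |x j| := by
    intro j; simp only [hw_def]
    split
    · rfl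
    · rename_i h; push_neg at h
      rw [hsupp j h]; simp
  have e2 : ∀ j : Fin n, w j * |x j| ^ p = (k:ℝ)⁻¹ * |x j| ^ p := by
    intro j; simp only [hw_def]
    split
    · rfl
    · rename_i h; push_neg at h
      rw [hsupp j h]; simp only [abs_zero]
      rw [Real.zero_rpow (by positivity)]; simp
  simp only [e1, e2] at H
  rw [← Finset.mul_sum, ← Finset.mul_sum, hnorm, mul_one] at H
  have : ∑ j, |x j| ≤ (k:ℝ) * ((k:ℝ)⁻¹) ^ (1/p) := by
    calc ∑ j, |x j| = (k:ℝ) * ((k:ℝ)⁻¹ * ∑ j, |x j|) := by field_simp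
      _ ≤ (k:ℝ) * ((k:ℝ)⁻¹) ^ (1/p) := by
          apply mul_le_mul_of_nonneg_left H (le_of_lt hk0)
  refine this.trans (le_of_eq ?_)
  rw [Real.inv_rpow (le_of_lt hk0), ← Real.rpow_neg (le_of_lt hk0)]
  nth_rewrite 1 [show (k:ℝ) = (k:ℝ) ^ (1:ℝ) by rw [Real.rpow_one]]
  rw [← Real.rpow_add hk0]
  ring_nf

lemma overlap_bound {n m : ℕ} (S : Fin n → Finset (Fin m)) (T : Finset (Fin n)) :
    (T.biUnion S).card +
      ∑ j ∈ T, ((S j) ∩ ((T.filter (fun j' => j' < j)).biUnion S)).card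
      ≤ ∑ j ∈ T, (S j).card := by
  classical
  set N : Fin n → Finset (Fin m) := fun j => S j \ ((T.filter (fun j' => j' < j)).biUnion S)
    with hN
  have hcard : ∀ j, (S j).card = (N j).card +
      ((S j) ∩ ((T.filter (fun j' => j' < j)).biUnion S)).card := by
    intro j
    rw [hN]
    exact (Finset.card_sdiff_add_card_inter _ _).symm
  have hdisj : ∀ x ∈ T, ∀ y ∈ T, x ≠ y → Disjoint (N x) (N y) := by
    intro a ha c hc hne
    rcases lt_or_gt_of_ne hne with h | h
    · rw [Finset.disjoint_left]
      intro i hi hi'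
      have hiS : i ∈ S a := (Finset.mem_sdiff.mp hi).1
      have : i ∈ (T.filter (fun j' => j' < c)).biUnion S :=
        Finset.mem_biUnion.mpr ⟨a, Finset.mem_filter.mpr ⟨ha, h⟩, hiS⟩
      exact (Finset.mem_sdiff.mp hi').2 this
    · rw [Finset.disjoint_right]
      intro i hi hi'
      have hiS : i ∈ S c := (Finset.mem_sdiff.mp hi).1
      have : i ∈ (T.filter (fun j' => j' < a)).biUnion S :=
        Finset.mem_biUnion.mpr ⟨c, Finset.mem_filter.mpr ⟨hc, h⟩, hiS⟩
      exact (Finset.mem_sdiff.mp hi').2 this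
  have h1 : ∑ j ∈ T, (N j).card = (T.biUnion N).card := (Finset.card_biUnion hdisj).symm
  have h2 : (T.biUnion S).card ≤ (T.biUnion N).card := by
    apply Finset.card_le_card
    intro i hi
    obtain ⟨j, hjT, hij⟩ := Finset.mem_biUnion.mp hi
    have hne : (T.filter (fun j => i ∈ S j)).Nonempty :=
      ⟨j, Finset.mem_filter.mpr ⟨hjT, hij⟩⟩
    set j₀ := (T.filter (fun j => i ∈ S j)).min' hne with hj₀
    have hj₀mem := (T.filter (fun j => i ∈ S j)).min'_mem hne
    rw [Finset.mem_filter] at hj₀mem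
    refine Finset.mem_biUnion.mpr ⟨j₀, hj₀mem.1, ?_⟩
    rw [hN, Finset.mem_sdiff]
    refine ⟨hj₀mem.2, ?_⟩
    intro hcon
    obtain ⟨j', hj', hij'⟩ := Finset.mem_biUnion.mp hcon
    rw [Finset.mem_filter] at hj'
    have : j₀ ≤ j' := Finset.min'_le _ _ (Finset.mem_filter.mpr ⟨hj'.1, hij'⟩)
    exact absurd hj'.2 (not_lt.mpr this)
  calc (T.biUnion S).card + ∑ j ∈ T, ((S j) ∩ ((T.filter (fun j' => j' < j)).biUnion S)).card
      ≤ (T.biUnion N).card + ∑ j ∈ T, ((S j) ∩ ((T.filter (fun j' => j' < j)).biUnion S)).card := by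
        omega
    _ = ∑ j ∈ T, (S j).card := by
        rw [← h1, ← Finset.sum_add_distrib]
        exact (Finset.sum_congr rfl fun j _ => hcard j).symm

lemma card_band_le {n : ℕ} (a t : ℕ) (Q : Fin n → Prop) [DecidablePred Q]
    (h : ∀ j, Q j → a ≤ (j : ℕ) ∧ (j : ℕ) < a + t) :
    (Finset.univ.filter Q).card ≤ t := by
  rw [← Finset.card_range t]
  refine Finset.card_le_card_of_injOn (fun j => (j : ℕ) - a) ?_ ?_
  · intro j hj
    have := h j (Finset.mem_filter.mp hj).2
    simp only [Finset.mem_coe, Finset.coe_range, Set.mem_Iio, Finset.mem_range]; omega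
  · intro j hj j' hj' he
    have h1 := h j (Finset.mem_filter.mp (Finset.mem_coe.mp hj)).2
    have h2 := h j' (Finset.mem_filter.mp (Finset.mem_coe.mp hj')).2
    simp only at he
    apply Fin.ext; omega

lemma fin_filter_sum (n : ℕ) (q : ℕ → Prop) [DecidablePred q] (ψ : ℕ → ℝ) :
    ∑ j ∈ Finset.univ.filter (fun j : Fin n => q (j:ℕ)), ψ (j:ℕ)
      = ∑ s ∈ (Finset.range n).filter q, ψ s := by
  have h := Finset.sum_map (Finset.univ.filter (fun j : Fin n => q (j:ℕ))) Fin.valEmbedding ψ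
  simp only [Fin.valEmbedding_apply] at h
  rw [← h]
  congr 1
  ext s
  simp only [Finset.mem_map, Finset.mem_filter, Finset.mem_univ, true_and,
    Fin.valEmbedding_apply, Finset.mem_range]
  constructor
  · rintro ⟨j, hq, rfl⟩; exact ⟨j.isLt, hq⟩
  · rintro ⟨hs, hq⟩; exact ⟨⟨s, hs⟩, hq, rfl⟩

end Helpers
instance (ℓ b j : ℕ) : Decidable (InBlock ℓ b j) :=
  inferInstanceAs (Decidable ((b - 1) * ℓ ≤ j ∧ j < b * ℓ))


section CountLemmas

lemma sec_prefix {n m d ℓ b : ℕ} {δ : ℝ} (hδ0 : 0 ≤ δ) (hd0 : (0:ℝ) ≤ d)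
    (S : Fin n → Finset (Fin m)) (hdeg : ∀ j, (S j).card = d)
    (hexp : ∀ T : Finset (Fin n), T.card ≤ 2 * ℓ →
      ((1 - δ) * d * T.card : ℝ) ≤ ((T.biUnion S).card : ℝ))
    (t : ℕ) (ht : t ≤ ℓ) :
    ∑ j ∈ Finset.univ.filter
        (fun j : Fin n => (b-1)*ℓ ≤ (j:ℕ) ∧ (j:ℕ) < (b-1)*ℓ + t),
      (((S j ∩ (Finset.univ.filter
        (fun j' : Fin n => InBlock ℓ b (j':ℕ) ∧ (j':ℕ) < (j:ℕ))).biUnion S).card : ℝ))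
      ≤ δ * d * t := by
  classical
  set T := Finset.univ.filter
      (fun j : Fin n => (b-1)*ℓ ≤ (j:ℕ) ∧ (j:ℕ) < (b-1)*ℓ + t) with hT
  have hTcard : T.card ≤ t := card_band_le _ t _ (fun j hj => hj)
  have hsub : ∀ j ∈ T, (S j ∩ (Finset.univ.filter
        (fun j' : Fin n => InBlock ℓ b (j':ℕ) ∧ (j':ℕ) < (j:ℕ))).biUnion S) ⊆
      (S j ∩ (T.filter (fun j' => j' < j)).biUnion S) := by
    intro j hj i hi
    rw [Finset.mem_inter] at hi ⊢
    refine ⟨hi.1, ?_⟩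
    obtain ⟨j', hj', hij'⟩ := Finset.mem_biUnion.mp hi.2
    rw [Finset.mem_filter] at hj'
    obtain ⟨⟨hj'1, _⟩, hj'2⟩ := hj'.2
    have hjT := (Finset.mem_filter.mp hj).2
    refine Finset.mem_biUnion.mpr ⟨j', ?_, hij'⟩
    rw [Finset.mem_filter, Finset.mem_filter]
    exact ⟨⟨Finset.mem_univ _, hj'1, by omega⟩, by exact Fin.lt_def.mpr hj'2⟩
  have hover := overlap_bound S T
  have hdsum : ∑ j ∈ T, (S j).card = d * T.card := by
    rw [Finset.sum_congr rfl (fun j _ => hdeg j), Finset.sum_const, smul_eq_mul, mul_comm]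
  have hx := hexp T (le_trans hTcard (by omega))
  have hle : ∑ j ∈ T, ((S j ∩ (Finset.univ.filter
        (fun j' : Fin n => InBlock ℓ b (j':ℕ) ∧ (j':ℕ) < (j:ℕ))).biUnion S).card : ℝ) ≤
      ∑ j ∈ T, ((S j ∩ (T.filter (fun j' => j' < j)).biUnion S).card : ℝ) := by
    apply Finset.sum_le_sum
    intro j hj
    exact_mod_cast Finset.card_le_card (hsub j hj)
  have hover' : ((T.biUnion S).card : ℝ) +
      ∑ j ∈ T, ((S j ∩ (T.filter (fun j' => j' < j)).biUnion S).card : ℝ) ≤ (d:ℝ) * T.card := by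
    have h := hover
    rw [hdsum] at h
    exact_mod_cast h
  have hTt : (T.card : ℝ) ≤ t := by exact_mod_cast hTcard
  nlinarith [hle, hover', hx, mul_nonneg hδ0 hd0]

lemma ter_block {n m d ℓ b b' : ℕ} {δ : ℝ} (hδ0 : 0 ≤ δ) (hd0 : (0:ℝ) ≤ d)
    (hb1 : 1 ≤ b) (hbb : b < b')
    (S : Fin n → Finset (Fin m)) (hdeg : ∀ j, (S j).card = d)
    (hexp : ∀ T : Finset (Fin n), T.card ≤ 2 * ℓ →
      ((1 - δ) * d * T.card : ℝ) ≤ ((T.biUnion S).card : ℝ)) :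
    ∑ j ∈ Finset.univ.filter (fun j : Fin n => (b'-1)*ℓ ≤ (j:ℕ) ∧ (j:ℕ) < b'*ℓ),
      ((S j ∩ (Finset.univ.filter (fun j₀ : Fin n => InBlock ℓ b (j₀:ℕ))).biUnion S).card : ℝ)
      ≤ δ * d * (2*ℓ) := by
  classical
  set U := Finset.univ.filter (fun j₀ : Fin n => InBlock ℓ b (j₀:ℕ)) with hU
  set V := Finset.univ.filter (fun j : Fin n => (b'-1)*ℓ ≤ (j:ℕ) ∧ (j:ℕ) < b'*ℓ) with hV
  set NU := U.biUnion S with hNU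
  have hbmul : (b-1)*ℓ + ℓ = b*ℓ := by
    cases b with
    | zero => omega
    | succ b0 => simp [Nat.succ_sub_one, Nat.succ_mul]
  have hbmul' : (b'-1)*ℓ + ℓ = b'*ℓ := by
    cases b' with
    | zero => omega
    | succ b0 => simp [Nat.succ_sub_one, Nat.succ_mul]
  have hUcard : U.card ≤ ℓ := by
    refine card_band_le ((b-1)*ℓ) ℓ _ (fun j hj => ?_)
    obtain ⟨h1, h2⟩ := hj
    omega
  have hVcard : V.card ≤ ℓ := by
    refine card_band_le ((b'-1)*ℓ) ℓ _ (fun j hj => ?_)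
    omega
  have hmul2 : b*ℓ ≤ (b'-1)*ℓ := Nat.mul_le_mul_right ℓ (by omega)
  have hdisj : Disjoint U V := by
    rw [Finset.disjoint_left]
    intro j hjU hjV
    have h1 := (Finset.mem_filter.mp hjU).2
    have h2 := (Finset.mem_filter.mp hjV).2
    obtain ⟨_, h1b⟩ := h1
    omega
  set T := U ∪ V with hT
  have hTcard : T.card = U.card + V.card := Finset.card_union_of_disjoint hdisj
  have hx := hexp T (by omega)
  have hbUsub : T.biUnion S ⊆ NU ∪ V.biUnion (fun j => S j \ NU) := by
    intro i hi
    obtain ⟨j, hjT, hij⟩ := Finset.mem_biUnion.mp hi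
    rcases Finset.mem_union.mp hjT with hjU | hjV
    · exact Finset.mem_union_left _ (Finset.mem_biUnion.mpr ⟨j, hjU, hij⟩)
    · by_cases hin : i ∈ NU
      · exact Finset.mem_union_left _ hin
      · exact Finset.mem_union_right _
          (Finset.mem_biUnion.mpr ⟨j, hjV, Finset.mem_sdiff.mpr ⟨hij, hin⟩⟩)
  have hcard1 : (T.biUnion S).card ≤ NU.card + ∑ j ∈ V, (S j \ NU).card :=
    le_trans (Finset.card_le_card hbUsub)
      (le_trans (Finset.card_union_le _ _) (by gcongr; exact Finset.card_biUnion_le))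
  have hNUcard : NU.card ≤ d * U.card := by
    refine le_trans Finset.card_biUnion_le ?_
    rw [Finset.sum_congr rfl (fun j _ => hdeg j), Finset.sum_const, smul_eq_mul, mul_comm]
  have hsd : ∀ j, ((S j \ NU).card : ℝ) = (d:ℝ) - ((S j ∩ NU).card : ℝ) := by
    intro j
    have := Finset.card_sdiff_add_card_inter (S j) NU
    rw [hdeg j] at this
    have : ((S j \ NU).card + (S j ∩ NU).card : ℕ) = d := this
    push_cast [← this]
    ring
  have hsum : ∑ j ∈ V, ((S j \ NU).card : ℝ) = (d:ℝ) * V.card - ∑ j ∈ V, ((S j ∩ NU).card : ℝ) := by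
    rw [Finset.sum_congr rfl (fun j _ => hsd j), Finset.sum_sub_distrib, Finset.sum_const,
      nsmul_eq_mul, mul_comm]
  have hcard1' : ((T.biUnion S).card : ℝ) ≤ (NU.card : ℝ) + ∑ j ∈ V, ((S j \ NU).card : ℝ) := by
    push_cast
    exact_mod_cast hcard1
  have hNUcard' : (NU.card : ℝ) ≤ (d:ℝ) * U.card := by exact_mod_cast hNUcard
  have hTc' : (T.card : ℝ) = (U.card : ℝ) + V.card := by exact_mod_cast hTcard
  have hU' : (U.card : ℝ) ≤ ℓ := by exact_mod_cast hUcard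
  have hV' : (V.card : ℝ) ≤ ℓ := by exact_mod_cast hVcard
  have hUn : (0:ℝ) ≤ U.card := by positivity
  have hVn : (0:ℝ) ≤ V.card := by positivity
  rw [hTc'] at hx
  rw [hsum] at hcard1'
  nlinarith [mul_nonneg hδ0 hd0]

lemma block_decomp (n ℓ b B : ℕ) (hℓ : 1 ≤ ℓ) :
    (Finset.range n).filter (fun s => b*ℓ ≤ s ∧ s < B*ℓ) =
      (Finset.Icc (b+1) B).biUnion
        (fun b' => (Finset.range n).filter (fun s => (b'-1)*ℓ ≤ s ∧ s < b'*ℓ)) := by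
  ext s
  simp only [Finset.mem_biUnion, Finset.mem_filter, Finset.mem_range, Finset.mem_Icc]
  constructor
  · rintro ⟨hsn, h1, h2⟩
    refine ⟨s/ℓ + 1, ⟨?_, ?_⟩, hsn, ?_, ?_⟩
    · have : b ≤ s/ℓ := (Nat.le_div_iff_mul_le (by omega)).mpr h1
      omega
    · have : s/ℓ < B := (Nat.div_lt_iff_lt_mul (by omega)).mpr h2
      omega
    · have : (s/ℓ + 1 - 1) * ℓ = (s/ℓ) * ℓ := by congr 1
      rw [this]
      exact Nat.div_mul_le_self s ℓ
    · have hdm := Nat.div_add_mod s ℓ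
      have hm : s % ℓ < ℓ := Nat.mod_lt _ (by omega)
      calc s = ℓ*(s/ℓ) + s%ℓ := hdm.symm
        _ < ℓ*(s/ℓ) + ℓ := Nat.add_lt_add_left hm _
        _ = (s/ℓ+1)*ℓ := by ring
  · rintro ⟨b', ⟨hb'1, hb'2⟩, hsn, h1, h2⟩
    exact ⟨hsn, le_trans (Nat.mul_le_mul_right ℓ (by omega)) h1,
      lt_of_lt_of_le h2 (Nat.mul_le_mul_right ℓ hb'2)⟩

lemma block_disjoint (n ℓ : ℕ) (P : Finset ℕ) :
    Set.PairwiseDisjoint ↑P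
      (fun b' : ℕ => (Finset.range n).filter (fun s => (b'-1)*ℓ ≤ s ∧ s < b'*ℓ)) := by
  intro a _ c _ hne
  dsimp [Function.onFun]
  rw [Finset.disjoint_left]
  intro s hs1 hs2
  simp only [Finset.mem_filter, Finset.mem_range] at hs1 hs2
  rcases lt_or_gt_of_ne hne with h | h
  · have : a*ℓ ≤ (c-1)*ℓ := Nat.mul_le_mul_right ℓ (by omega)
    omega
  · have : c*ℓ ≤ (a-1)*ℓ := Nat.mul_le_mul_right ℓ (by omega)
    omega

end CountLemmas


/-- For the `d^(-1/p)`-scaled adjacency matrix of a `(2ℓ,d,δ)`-expander and a `k`-sparse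
unit vector `x` supported on the first `k` coordinates with nonincreasing absolute values,
`Σ_{(i,j) ∈ D_b ∪ D'_b} A_{ij} |x_j| ≤ 3δ (dk)^(1-1/p)`. -/
theorem expander_secondary_tertiary_mass
    (n m d ℓ k b : ℕ) (δ p : ℝ) (hδ0 : 0 < δ) (hδ1 : δ < 1 / 2)
    (hp1 : 1 < p) (hp2 : p < 2)
    (hd : 1 ≤ d) (hℓ : 1 ≤ ℓ) (hk : 1 ≤ k) (hkn : k ≤ n)
    (hb1 : 1 ≤ b) (hb2 : b ≤ (k + ℓ - 1) / ℓ)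
    (S : Fin n → Finset (Fin m))
    (hdeg : ∀ j, (S j).card = d)
    (hexp : ∀ T : Finset (Fin n), T.card ≤ 2 * ℓ →
      ((1 - δ) * d * T.card : ℝ) ≤ ((T.biUnion S).card : ℝ))
    (x : Fin n → ℝ)
    (hsupp : ∀ j : Fin n, k ≤ (j : ℕ) → x j = 0)
    (hsorted : ∀ j j' : Fin n, (j : ℕ) ≤ (j' : ℕ) → |x j'| ≤ |x j|)
    (hnorm : ∑ j, |x j| ^ p = 1) :
    ∑ ij : Fin m × Fin n,
        Set.indicator (SecondaryEntries S ℓ b ∪ TertiaryEntries S ℓ b k)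
          (fun ij => (d : ℝ) ^ (-(1 / p)) * |x ij.2|) ij ≤
      3 * δ * ((d : ℝ) * k) ^ (1 - 1 / p) := by
  classical
  have hd0 : (0:ℝ) ≤ d := Nat.cast_nonneg d
  have hdpos : (0:ℝ) < d := by exact_mod_cast hd
  have hδ0' : (0:ℝ) ≤ δ := le_of_lt hδ0
  have hℓpos : (0:ℝ) < ℓ := by exact_mod_cast hℓ
  set c : ℝ := (d : ℝ) ^ (-(1/p)) with hc
  have hc0 : 0 ≤ c := Real.rpow_nonneg hd0 _
  have hbmul : (b-1)*ℓ + ℓ = b*ℓ := by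
    cases b with
    | zero => omega
    | succ b0 => simp [Nat.succ_sub_one, Nat.succ_mul]
  -- the weight function on ℕ
  set g : ℕ → ℝ := fun s => if h : s < n then |x ⟨s, h⟩| else 0 with hg
  have hg0 : ∀ s, 0 ≤ g s := by
    intro s; rw [hg]; dsimp only; split
    · exact abs_nonneg _
    · exact le_refl 0
  have hgz : ∀ s, n ≤ s → g s = 0 := by
    intro s hs; rw [hg]; dsimp only; rw [dif_neg (by omega)]
  have hganti : ∀ s t, s ≤ t → g t ≤ g s := by
    intro s t hst
    by_cases hti : t < n
    · rw [hg]; dsimp only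
      rw [dif_pos hti, dif_pos (lt_of_le_of_lt hst hti)]
      exact hsorted ⟨s, lt_of_le_of_lt hst hti⟩ ⟨t, hti⟩ hst
    · rw [hgz t (by omega)]; exact hg0 s
  have hgval : ∀ j : Fin n, g (j:ℕ) = |x j| := by
    intro j; rw [hg]; dsimp only; rw [dif_pos j.isLt]
  have hL : ∑ s ∈ Finset.range n, g s ≤ (k:ℝ) ^ (1 - 1/p) := by
    have he : ∑ s ∈ Finset.range n, g s = ∑ j : Fin n, |x j| := by
      rw [← Fin.sum_univ_eq_sum_range g n]
      exact Finset.sum_congr rfl fun j _ => hgval j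
    rw [he]; exact l1_bound n k p hp1 hk hkn x hsupp hnorm
  -- the per-column entry sets
  set E : Fin n → Finset (Fin m) := fun j => S j ∩ (Finset.univ.filter
      (fun j' : Fin n => InBlock ℓ b (j':ℕ) ∧ (j':ℕ) < (j:ℕ))).biUnion S with hE
  set F : Fin n → Finset (Fin m) := fun j => S j ∩ (Finset.univ.filter
      (fun j₀ : Fin n => InBlock ℓ b (j₀:ℕ))).biUnion S with hF
  set ψE : ℕ → ℝ := fun s => if h : s < n then ((E ⟨s,h⟩).card : ℝ) else 0 with hψE
  set ψF : ℕ → ℝ := fun s => if h : s < n then ((F ⟨s,h⟩).card : ℝ) else 0 with hψF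
  have hψE0 : ∀ s, 0 ≤ ψE s := by
    intro s; rw [hψE]; dsimp only; split
    · positivity
    · exact le_refl 0
  have hψF0 : ∀ s, 0 ≤ ψF s := by
    intro s; rw [hψF]; dsimp only; split
    · positivity
    · exact le_refl 0
  have hf0 : ∀ ij : Fin m × Fin n, 0 ≤ c * |x ij.2| :=
    fun ij => mul_nonneg hc0 (abs_nonneg _)
  -- split the union
  have hsplit : ∑ ij : Fin m × Fin n,
        Set.indicator (SecondaryEntries S ℓ b ∪ TertiaryEntries S ℓ b k)
          (fun ij => c * |x ij.2|) ij ≤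
      (∑ ij : Fin m × Fin n,
        Set.indicator (SecondaryEntries S ℓ b) (fun ij => c * |x ij.2|) ij) +
      ∑ ij : Fin m × Fin n,
        Set.indicator (TertiaryEntries S ℓ b k) (fun ij => c * |x ij.2|) ij := by
    rw [← Finset.sum_add_distrib]
    apply Finset.sum_le_sum
    intro ij _
    by_cases hA : ij ∈ SecondaryEntries S ℓ b
    · rw [Set.indicator_of_mem (Set.mem_union_left _ hA), Set.indicator_of_mem hA]
      have hnn := Set.indicator_nonneg
        (fun a (_ : a ∈ TertiaryEntries S ℓ b k) => hf0 a) ij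
      linarith
    · by_cases hB2 : ij ∈ TertiaryEntries S ℓ b k
      · rw [Set.indicator_of_mem (Set.mem_union_right _ hB2), Set.indicator_of_mem hB2,
          Set.indicator_of_notMem hA, zero_add]
      · rw [Set.indicator_of_notMem hA, Set.indicator_of_notMem hB2,
          Set.indicator_of_notMem (fun hcc => (Set.mem_or_mem_of_mem_union hcc).elim hA hB2)]
        simp
  -- secondary part, columnwise
  have hsec1 : ∑ ij : Fin m × Fin n,
      Set.indicator (SecondaryEntries S ℓ b) (fun ij => c * |x ij.2|) ij ≤
      ∑ j : Fin n, (if InBlock ℓ b (j:ℕ) then ((E j).card : ℝ) * (c * |x j|) else 0) := by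
    rw [Fintype.sum_prod_type_right]
    apply Finset.sum_le_sum
    intro j _
    by_cases hbj : InBlock ℓ b (j:ℕ)
    · rw [if_pos hbj]
      have hpt : ∀ i : Fin m,
          Set.indicator (SecondaryEntries S ℓ b) (fun ij => c * |x ij.2|) (i, j) ≤
          if i ∈ E j then c * |x j| else 0 := by
        intro i
        by_cases hmem : (i, j) ∈ SecondaryEntries S ℓ b
        · rw [Set.indicator_of_mem hmem]
          obtain ⟨h1, h2, j', hj'1, hj'2, hj'3⟩ := hmem
          rw [if_pos (Finset.mem_inter.mpr ⟨h1, Finset.mem_biUnion.mpr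
            ⟨j', Finset.mem_filter.mpr ⟨Finset.mem_univ _, hj'1, hj'3⟩, hj'2⟩⟩)]
        · rw [Set.indicator_of_notMem hmem]
          split
          · exact mul_nonneg hc0 (abs_nonneg _)
          · exact le_refl 0
      calc ∑ i : Fin m,
          Set.indicator (SecondaryEntries S ℓ b) (fun ij => c * |x ij.2|) (i, j)
          ≤ ∑ i : Fin m, (if i ∈ E j then c * |x j| else 0) :=
            Finset.sum_le_sum (fun i _ => hpt i)
        _ = ∑ i ∈ Finset.univ ∩ E j, (c * |x j|) := Finset.sum_ite_mem _ _ _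
        _ = ((E j).card : ℝ) * (c * |x j|) := by
            rw [Finset.univ_inter, Finset.sum_const, nsmul_eq_mul]
    · rw [if_neg hbj]
      have hz : ∀ i : Fin m,
          Set.indicator (SecondaryEntries S ℓ b) (fun ij => c * |x ij.2|) (i, j) = 0 := by
        intro i
        apply Set.indicator_of_notMem
        intro hmem
        exact hbj hmem.2.1
      rw [Finset.sum_congr rfl (fun i _ => hz i)]
      simp
  -- rewrite secondary sum as a sum over the block offsets
  have hsec2 : ∑ j : Fin n, (if InBlock ℓ b (j:ℕ) then ((E j).card : ℝ) * (c * |x j|) else 0)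
      = c * ∑ t ∈ Finset.range ℓ, ψE ((b-1)*ℓ + t) * g ((b-1)*ℓ + t) := by
    rw [← Finset.sum_filter]
    have e0 : ∀ j ∈ Finset.univ.filter (fun j : Fin n => InBlock ℓ b (j:ℕ)),
        ((E j).card : ℝ) * (c * |x j|) = c * (ψE (j:ℕ) * g (j:ℕ)) := by
      intro j _
      rw [hψE]; dsimp only
      rw [dif_pos j.isLt, hgval j, Fin.eta]
      ring
    rw [Finset.sum_congr rfl e0, ← Finset.mul_sum]
    congr 1
    rw [fin_filter_sum n (fun s => InBlock ℓ b s) (fun s => ψE s * g s)]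
    have himg : ((Finset.range ℓ).filter (fun t => (b-1)*ℓ + t < n)).image
        (fun t => (b-1)*ℓ + t) = (Finset.range n).filter (fun s => InBlock ℓ b s) := by
      ext s
      simp only [Finset.mem_image, Finset.mem_filter, Finset.mem_range]
      constructor
      · rintro ⟨t, ⟨htℓ, htn⟩, rfl⟩
        exact ⟨htn, Nat.le_add_right _ _, by omega⟩
      · rintro ⟨hsn, hs1, hs2⟩
        exact ⟨s - (b-1)*ℓ, ⟨by omega, by omega⟩, by omega⟩
    rw [← himg, Finset.sum_image (by intro a _ a' _ h; (try simp only at h); omega)]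
    rw [Finset.sum_filter_of_ne]
    intro t _ hne
    by_contra hge
    push_neg at hge
    apply hne
    rw [hψE]; dsimp only
    rw [dif_neg (by omega), zero_mul]
  -- Abel summation for the secondary part
  have hsec3 : ∑ t ∈ Finset.range ℓ, ψE ((b-1)*ℓ + t) * g ((b-1)*ℓ + t) ≤
      (δ * d) * ∑ t ∈ Finset.range ℓ, g ((b-1)*ℓ + t) := by
    refine abel_aux (δ * d) ℓ (fun t => ψE ((b-1)*ℓ + t)) (fun t => g ((b-1)*ℓ + t))
      (fun s _ => hg0 _) (fun s t hst => hganti _ _ (by omega)) ?_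
    intro t ht
    -- prefix bound via sec_prefix
    have hkey := sec_prefix (b := b) hδ0' hd0 S hdeg hexp t ht
    have htrans : ∑ s ∈ Finset.range t, ψE ((b-1)*ℓ + s) =
        ∑ j ∈ Finset.univ.filter
          (fun j : Fin n => (b-1)*ℓ ≤ (j:ℕ) ∧ (j:ℕ) < (b-1)*ℓ + t), ((E j).card : ℝ) := by
      have e1 : ∀ j ∈ Finset.univ.filter
          (fun j : Fin n => (b-1)*ℓ ≤ (j:ℕ) ∧ (j:ℕ) < (b-1)*ℓ + t),
          ((E j).card : ℝ) = ψE (j:ℕ) := by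
        intro j _
        rw [hψE]; dsimp only
        rw [dif_pos j.isLt, Fin.eta]
      rw [Finset.sum_congr rfl e1]
      rw [fin_filter_sum n (fun s => (b-1)*ℓ ≤ s ∧ s < (b-1)*ℓ + t) ψE]
      have himg : ((Finset.range t).filter (fun s => (b-1)*ℓ + s < n)).image
          (fun s => (b-1)*ℓ + s) =
          (Finset.range n).filter (fun s => (b-1)*ℓ ≤ s ∧ s < (b-1)*ℓ + t) := by
        ext s
        simp only [Finset.mem_image, Finset.mem_filter, Finset.mem_range]
        constructor
        · rintro ⟨u, ⟨hu1, hu2⟩, rfl⟩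
          exact ⟨hu2, Nat.le_add_right _ _, by omega⟩
        · rintro ⟨hsn, hs1, hs2⟩
          exact ⟨s - (b-1)*ℓ, ⟨by omega, by omega⟩, by omega⟩
      rw [← himg, Finset.sum_image (by intro a _ a' _ h; (try simp only at h); omega)]
      rw [Finset.sum_filter_of_ne]
      intro u _ hne
      by_contra hge
      push_neg at hge
      apply hne
      rw [hψE]; dsimp only
      rw [dif_neg (by omega)]
    rw [htrans]
    calc _ ≤ δ * d * t := hkey
      _ = δ * d * t := rfl
  have hsecW : ∑ t ∈ Finset.range ℓ, g ((b-1)*ℓ + t) ≤ ∑ s ∈ Finset.range n, g s :=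
    sum_comp_le n g hg0 hgz (Finset.range ℓ) (fun t => (b-1)*ℓ + t)
      (by intro a _ a' _ h; (try simp only at h); omega)
  -- tertiary part, columnwise
  have hter1 : ∑ ij : Fin m × Fin n,
      Set.indicator (TertiaryEntries S ℓ b k) (fun ij => c * |x ij.2|) ij ≤
      ∑ j : Fin n, (if b*ℓ ≤ (j:ℕ) ∧ (j:ℕ) < ((k + ℓ - 1) / ℓ)*ℓ
        then ((F j).card : ℝ) * (c * |x j|) else 0) := by
    rw [Fintype.sum_prod_type_right]
    apply Finset.sum_le_sum
    intro j _
    by_cases hbj : b*ℓ ≤ (j:ℕ) ∧ (j:ℕ) < ((k + ℓ - 1) / ℓ)*ℓ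
    · rw [if_pos hbj]
      have hpt : ∀ i : Fin m,
          Set.indicator (TertiaryEntries S ℓ b k) (fun ij => c * |x ij.2|) (i, j) ≤
          if i ∈ F j then c * |x j| else 0 := by
        intro i
        by_cases hmem : (i, j) ∈ TertiaryEntries S ℓ b k
        · rw [Set.indicator_of_mem hmem]
          obtain ⟨h1, h2, h3, j₀, hj₀1, hj₀2⟩ := hmem
          rw [if_pos (Finset.mem_inter.mpr ⟨h1, Finset.mem_biUnion.mpr
            ⟨j₀, Finset.mem_filter.mpr ⟨Finset.mem_univ _, hj₀1⟩, hj₀2⟩⟩)]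
        · rw [Set.indicator_of_notMem hmem]
          split
          · exact mul_nonneg hc0 (abs_nonneg _)
          · exact le_refl 0
      calc ∑ i : Fin m,
          Set.indicator (TertiaryEntries S ℓ b k) (fun ij => c * |x ij.2|) (i, j)
          ≤ ∑ i : Fin m, (if i ∈ F j then c * |x j| else 0) :=
            Finset.sum_le_sum (fun i _ => hpt i)
        _ = ∑ i ∈ Finset.univ ∩ F j, (c * |x j|) := Finset.sum_ite_mem _ _ _
        _ = ((F j).card : ℝ) * (c * |x j|) := by
            rw [Finset.univ_inter, Finset.sum_const, nsmul_eq_mul]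
    · rw [if_neg hbj]
      have hz : ∀ i : Fin m,
          Set.indicator (TertiaryEntries S ℓ b k) (fun ij => c * |x ij.2|) (i, j) = 0 := by
        intro i
        apply Set.indicator_of_notMem
        intro hmem
        exact hbj ⟨hmem.2.1, hmem.2.2.1⟩
      rw [Finset.sum_congr rfl (fun i _ => hz i)]
      simp
  have hter2 : ∑ j : Fin n, (if b*ℓ ≤ (j:ℕ) ∧ (j:ℕ) < ((k + ℓ - 1) / ℓ)*ℓ
        then ((F j).card : ℝ) * (c * |x j|) else 0)
      = c * ∑ s ∈ (Finset.range n).filter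
          (fun s => b*ℓ ≤ s ∧ s < ((k + ℓ - 1) / ℓ)*ℓ), ψF s * g s := by
    rw [← Finset.sum_filter]
    have e0 : ∀ j ∈ Finset.univ.filter
        (fun j : Fin n => b*ℓ ≤ (j:ℕ) ∧ (j:ℕ) < ((k + ℓ - 1) / ℓ)*ℓ),
        ((F j).card : ℝ) * (c * |x j|) = c * (ψF (j:ℕ) * g (j:ℕ)) := by
      intro j _
      rw [hψF]; dsimp only
      rw [dif_pos j.isLt, hgval j, Fin.eta]
      ring
    rw [Finset.sum_congr rfl e0, ← Finset.mul_sum]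
    congr 1
    exact fin_filter_sum n (fun s => b*ℓ ≤ s ∧ s < ((k + ℓ - 1) / ℓ)*ℓ)
      (fun s => ψF s * g s)
  -- per-block bound for the tertiary part
  have hblk : ∀ b' ∈ Finset.Icc (b+1) ((k + ℓ - 1) / ℓ),
      ∑ s ∈ (Finset.range n).filter (fun s => (b'-1)*ℓ ≤ s ∧ s < b'*ℓ), ψF s * g s ≤
      (2 * (δ * d)) * ∑ t ∈ Finset.range ℓ, g ((b'-2)*ℓ + t) := by
    intro b' hb'
    rw [Finset.mem_Icc] at hb'
    have hb'2 : 2 ≤ b' := by omega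
    have h1 : (b'-2)*ℓ + ℓ = (b'-1)*ℓ := by
      have e : b' - 2 + 1 = b' - 1 := by omega
      rw [← e, add_mul, one_mul]
    set M := (ℓ:ℝ)⁻¹ * ∑ t ∈ Finset.range ℓ, g ((b'-2)*ℓ + t) with hM
    have hM0 : 0 ≤ M := by
      apply mul_nonneg (by positivity)
      exact Finset.sum_nonneg fun t _ => hg0 _
    have hgM : ∀ s ∈ (Finset.range n).filter (fun s => (b'-1)*ℓ ≤ s ∧ s < b'*ℓ),
        g s ≤ M := by
      intro s hs
      rw [Finset.mem_filter, Finset.mem_range] at hs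
      have hstep : ∀ t ∈ Finset.range ℓ, g s ≤ g ((b'-2)*ℓ + t) := by
        intro t ht
        rw [Finset.mem_range] at ht
        apply hganti
        have h2 : (b'-2)*ℓ + ℓ ≤ s := by rw [h1]; exact hs.2.1
        omega
      have hcalc : (ℓ:ℝ) * g s ≤ ∑ t ∈ Finset.range ℓ, g ((b'-2)*ℓ + t) := by
        have e : (ℓ:ℝ) * g s = ∑ t ∈ Finset.range ℓ, g s := by
          rw [Finset.sum_const, Finset.card_range, nsmul_eq_mul]
        rw [e]
        exact Finset.sum_le_sum hstep
      rw [hM]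
      calc g s = (ℓ:ℝ)⁻¹ * ((ℓ:ℝ) * g s) := by field_simp
        _ ≤ (ℓ:ℝ)⁻¹ * ∑ t ∈ Finset.range ℓ, g ((b'-2)*ℓ + t) :=
            mul_le_mul_of_nonneg_left hcalc (by positivity)
    have hcnt : ∑ s ∈ (Finset.range n).filter (fun s => (b'-1)*ℓ ≤ s ∧ s < b'*ℓ), ψF s ≤
        δ * d * (2*ℓ) := by
      have hkey := ter_block (b' := b') hδ0' hd0 hb1 (by omega) S hdeg hexp
      have e1 : ∀ j ∈ Finset.univ.filter
          (fun j : Fin n => (b'-1)*ℓ ≤ (j:ℕ) ∧ (j:ℕ) < b'*ℓ),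
          ((F j).card : ℝ) = ψF (j:ℕ) := by
        intro j _
        rw [hψF]; dsimp only
        rw [dif_pos j.isLt, Fin.eta]
      rw [Finset.sum_congr rfl e1,
        fin_filter_sum n (fun s => (b'-1)*ℓ ≤ s ∧ s < b'*ℓ) ψF] at hkey
      exact hkey
    calc ∑ s ∈ (Finset.range n).filter (fun s => (b'-1)*ℓ ≤ s ∧ s < b'*ℓ), ψF s * g s
        ≤ ∑ s ∈ (Finset.range n).filter (fun s => (b'-1)*ℓ ≤ s ∧ s < b'*ℓ), ψF s * M :=
          Finset.sum_le_sum (fun s hs =>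
            mul_le_mul_of_nonneg_left (hgM s hs) (hψF0 s))
      _ = (∑ s ∈ (Finset.range n).filter (fun s => (b'-1)*ℓ ≤ s ∧ s < b'*ℓ), ψF s) * M := by
          rw [Finset.sum_mul]
      _ ≤ (δ * d * (2*ℓ)) * M := mul_le_mul_of_nonneg_right hcnt hM0
      _ = (2 * (δ * d)) * ∑ t ∈ Finset.range ℓ, g ((b'-2)*ℓ + t) := by
          rw [hM]
          field_simp
  -- sum the tertiary blocks
  have hter3 : ∑ s ∈ (Finset.range n).filter
        (fun s => b*ℓ ≤ s ∧ s < ((k + ℓ - 1) / ℓ)*ℓ), ψF s * g s ≤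
      (2 * (δ * d)) * ∑ s ∈ Finset.range n, g s := by
    rw [block_decomp n ℓ b ((k + ℓ - 1) / ℓ) hℓ]
    rw [Finset.sum_biUnion (block_disjoint n ℓ _)]
    calc ∑ b' ∈ Finset.Icc (b+1) ((k + ℓ - 1) / ℓ),
          ∑ s ∈ (Finset.range n).filter (fun s => (b'-1)*ℓ ≤ s ∧ s < b'*ℓ), ψF s * g s
        ≤ ∑ b' ∈ Finset.Icc (b+1) ((k + ℓ - 1) / ℓ),
            (2 * (δ * d)) * ∑ t ∈ Finset.range ℓ, g ((b'-2)*ℓ + t) :=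
          Finset.sum_le_sum hblk
      _ = (2 * (δ * d)) * ∑ b' ∈ Finset.Icc (b+1) ((k + ℓ - 1) / ℓ),
            ∑ t ∈ Finset.range ℓ, g ((b'-2)*ℓ + t) := by rw [Finset.mul_sum]
      _ ≤ (2 * (δ * d)) * ∑ s ∈ Finset.range n, g s := by
          apply mul_le_mul_of_nonneg_left _ (by positivity)
          have hps : ∑ b' ∈ Finset.Icc (b+1) ((k + ℓ - 1) / ℓ),
              ∑ t ∈ Finset.range ℓ, g ((b'-2)*ℓ + t)
              = ∑ q ∈ (Finset.Icc (b+1) ((k + ℓ - 1) / ℓ)) ×ˢ (Finset.range ℓ),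
                g ((q.1-2)*ℓ + q.2) := by
            rw [Finset.sum_product]
          rw [hps]
          refine sum_comp_le n g hg0 hgz
            ((Finset.Icc (b+1) ((k + ℓ - 1) / ℓ)) ×ˢ (Finset.range ℓ))
            (fun q => (q.1-2)*ℓ + q.2) ?_
          intro x1 hx1 x2 hx2 he
          simp only [Finset.mem_product, Finset.mem_Icc, Finset.mem_range] at hx1 hx2
          have hd1 : ((x1.1-2)*ℓ + x1.2) / ℓ = x1.1 - 2 := by
            rw [mul_comm, Nat.mul_add_div (by omega), Nat.div_eq_of_lt hx1.2]
            omega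
          have hd2 : ((x2.1-2)*ℓ + x2.2) / ℓ = x2.1 - 2 := by
            rw [mul_comm, Nat.mul_add_div (by omega), Nat.div_eq_of_lt hx2.2]
            omega
          have hfst : x1.1 = x2.1 := by
            have : x1.1 - 2 = x2.1 - 2 := by rw [← hd1, ← hd2, he]
            omega
          have hsnd : x1.2 = x2.2 := by
            rw [hfst] at he
            omega
          exact Prod.ext hfst hsnd
  -- put everything together
  have hfinal1 : ∑ ij : Fin m × Fin n,
      Set.indicator (SecondaryEntries S ℓ b ∪ TertiaryEntries S ℓ b k)
        (fun ij => c * |x ij.2|) ij ≤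
      3 * δ * ((c * d) * (k:ℝ) ^ (1 - 1/p)) := by
    have hK0 : (0:ℝ) ≤ (k:ℝ) ^ (1 - 1/p) := Real.rpow_nonneg (Nat.cast_nonneg k) _
    have hsec : ∑ ij : Fin m × Fin n,
        Set.indicator (SecondaryEntries S ℓ b) (fun ij => c * |x ij.2|) ij ≤
        c * ((δ * d) * (k:ℝ) ^ (1 - 1/p)) := by
      refine le_trans hsec1 (le_trans (le_of_eq hsec2) ?_)
      apply mul_le_mul_of_nonneg_left _ hc0
      refine le_trans hsec3 ?_
      apply mul_le_mul_of_nonneg_left _ (by positivity)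
      exact le_trans hsecW hL
    have hter : ∑ ij : Fin m × Fin n,
        Set.indicator (TertiaryEntries S ℓ b k) (fun ij => c * |x ij.2|) ij ≤
        c * ((2 * (δ * d)) * (k:ℝ) ^ (1 - 1/p)) := by
      refine le_trans hter1 (le_trans (le_of_eq hter2) ?_)
      apply mul_le_mul_of_nonneg_left _ hc0
      refine le_trans hter3 ?_
      apply mul_le_mul_of_nonneg_left _ (by positivity)
      exact hL
    calc _ ≤ _ := hsplit
      _ ≤ c * ((δ * d) * (k:ℝ) ^ (1 - 1/p)) + c * ((2 * (δ * d)) * (k:ℝ) ^ (1 - 1/p)) :=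
          add_le_add hsec hter
      _ = 3 * δ * ((c * d) * (k:ℝ) ^ (1 - 1/p)) := by ring
  refine le_trans hfinal1 (le_of_eq ?_)
  have hcd : c * (d:ℝ) = (d:ℝ) ^ (1 - 1/p) := by
    rw [hc]
    nth_rewrite 2 [show (d:ℝ) = (d:ℝ) ^ (1:ℝ) from (Real.rpow_one _).symm]
    rw [← Real.rpow_add hdpos]
    ring_nf
  rw [hcd, ← Real.mul_rpow hd0 (Nat.cast_nonneg k)]
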